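/- Let F = FractionRing (MvPolynomial (Fin 3) ℚ), with Z₁, Z₂, Z₃ ∈ F the images of the three polynomial variables, and let q = X be the variable of the one-variable rational function field RatFunc F. Define H ∈ RatFunc F by H = −(1/(4·q·(Z₃² − q²)))·( 1/((Z₁−q)²·(Z₂+q)²) + 1/((Z₁+q)²·(Z₂−q)²) ). Then the coefficient at −1 (the residue at q = 0) of the image of H under the canonical embedding of RatFunc F into the field of formal Laurent series LaurentSeries F equals −1/(2·Z₁²·Z₂²·Z₃²). -/

import Mathlib

open scoped LaurentSeries

noncomputable section

/-- The field of rational functions in three (transcendental) variables. -/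
abbrev F3 : Type := FractionRing (MvPolynomial (Fin 3) ℚ)

/-- The images `Z₁, Z₂, Z₃` of the polynomial variables in `F3`, as constants of `RatFunc F3`. -/
def Z3 (i : Fin 3) : RatFunc F3 :=
  RatFunc.C (algebraMap (MvPolynomial (Fin 3) ℚ) F3 (MvPolynomial.X i))

open Polynomial HahnSeries in
lemma residue_lemma {F : Type} [Field F] (p s : Polynomial F) (hs : s.coeff 0 ≠ 0) :
    ((((p : RatFunc F) / (RatFunc.X * (s : RatFunc F))) : RatFunc F) : LaurentSeries F).coeff (-1)
      = p.coeff 0 / s.coeff 0 := by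
  set S : PowerSeries F := (s : PowerSeries F) with hSdef
  have hS0 : PowerSeries.constantCoeff S ≠ 0 := by
    rw [hSdef, ← PowerSeries.coeff_zero_eq_constantCoeff_apply, Polynomial.coeff_coe]; exact hs
  have hSinv : S * S⁻¹ = 1 := PowerSeries.mul_inv_cancel S hS0
  have hSL : ((S : LaurentSeries F)) ≠ 0 := by
    intro h
    apply hS0
    have : S = 0 := HahnSeries.ofPowerSeries_injective (h.trans (map_zero _).symm)
    simp [this]
  have hXL : ((single 1 1 : LaurentSeries F)) ≠ 0 := single_ne_zero one_ne_zero
  have key : ((((p : RatFunc F) / (RatFunc.X * (s : RatFunc F))) : RatFunc F) : LaurentSeries F)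
      = ((((p : PowerSeries F) * S⁻¹ : PowerSeries F) : LaurentSeries F)) * single (-1) 1 := by
    rw [map_div₀, map_mul, RatFunc.coe_X, ← RatFunc.coe_coe, ← RatFunc.coe_coe]
    rw [div_eq_iff (mul_ne_zero hXL hSL)]
    symm
    calc (((((p : PowerSeries F) * S⁻¹ : PowerSeries F) : LaurentSeries F)) * single (-1) 1) *
          (single 1 1 * (S : LaurentSeries F))
        = (((((p : PowerSeries F) * S⁻¹) * S : PowerSeries F) : LaurentSeries F)) *
            (single (-1) 1 * single 1 1) := by push_cast [PowerSeries.coe_mul]; ring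
      _ = ((p : PowerSeries F) : LaurentSeries F) := by
            rw [mul_assoc ((p : PowerSeries F)) S⁻¹ S, PowerSeries.inv_mul_cancel S hS0, mul_one,
              HahnSeries.single_mul_single, mul_one]
            norm_num [HahnSeries.single_zero_one]
  rw [key]
  have h2 := HahnSeries.coeff_mul_single_add
    (x := (((p : PowerSeries F) * S⁻¹ : PowerSeries F) : LaurentSeries F))
    (a := (0 : ℤ)) (b := (-1 : ℤ)) (r := (1 : F))
  rw [zero_add, mul_one] at h2
  rw [h2]
  have h3 := HahnSeries.ofPowerSeries_apply_coeff (Γ := ℤ) ((p : PowerSeries F) * S⁻¹) 0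
  simp only [Nat.cast_zero] at h3
  rw [show ((((p : PowerSeries F) * S⁻¹ : PowerSeries F) : LaurentSeries F)).coeff (0:ℤ)
      = PowerSeries.coeff 0 ((p : PowerSeries F) * S⁻¹) from h3]
  rw [PowerSeries.coeff_zero_eq_constantCoeff_apply, map_mul, PowerSeries.constantCoeff_inv,
    ← PowerSeries.coeff_zero_eq_constantCoeff_apply, ← PowerSeries.coeff_zero_eq_constantCoeff_apply,
    Polynomial.coeff_coe, hSdef, Polynomial.coeff_coe, div_eq_mul_inv]

set_option maxHeartbeats 2000000 in
theorem airy_omega03_residue :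
    (((-(1 / (4 * RatFunc.X * ((Z3 2) ^ 2 - RatFunc.X ^ 2))) *
        (1 / (((Z3 0) - RatFunc.X) ^ 2 * ((Z3 1) + RatFunc.X) ^ 2) +
         1 / (((Z3 0) + RatFunc.X) ^ 2 * ((Z3 1) - RatFunc.X) ^ 2))) : RatFunc F3) :
      LaurentSeries F3).coeff (-1)
    = -1 / (2 * (algebraMap (MvPolynomial (Fin 3) ℚ) F3 (MvPolynomial.X 0)) ^ 2
              * (algebraMap (MvPolynomial (Fin 3) ℚ) F3 (MvPolynomial.X 1)) ^ 2
              * (algebraMap (MvPolynomial (Fin 3) ℚ) F3 (MvPolynomial.X 2)) ^ 2) := by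
  set a : F3 := algebraMap (MvPolynomial (Fin 3) ℚ) F3 (MvPolynomial.X 0) with ha_def
  set b : F3 := algebraMap (MvPolynomial (Fin 3) ℚ) F3 (MvPolynomial.X 1) with hb_def
  set c : F3 := algebraMap (MvPolynomial (Fin 3) ℚ) F3 (MvPolynomial.X 2) with hc_def
  have ha : a ≠ 0 := by
    rw [ha_def]
    exact (map_ne_zero_iff _ (IsFractionRing.injective _ _)).mpr (MvPolynomial.X_ne_zero 0)
  have hb : b ≠ 0 := by
    rw [hb_def]
    exact (map_ne_zero_iff _ (IsFractionRing.injective _ _)).mpr (MvPolynomial.X_ne_zero 1)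
  have hc : c ≠ 0 := by
    rw [hc_def]
    exact (map_ne_zero_iff _ (IsFractionRing.injective _ _)).mpr (MvPolynomial.X_ne_zero 2)
  -- the numerator and denominator polynomials
  set N : Polynomial F3 :=
    -(((Polynomial.C a + Polynomial.X) * (Polynomial.C b - Polynomial.X)) ^ 2 +
      ((Polynomial.C a - Polynomial.X) * (Polynomial.C b + Polynomial.X)) ^ 2) with hN
  set s : Polynomial F3 :=
    4 * (Polynomial.C c ^ 2 - Polynomial.X ^ 2) *
      (((Polynomial.C a - Polynomial.X) * (Polynomial.C b + Polynomial.X) *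
        (Polynomial.C a + Polynomial.X) * (Polynomial.C b - Polynomial.X)) ^ 2) with hs_def
  have hs0 : s.coeff 0 = 4 * c ^ 2 * (a * b * a * b) ^ 2 := by
    rw [Polynomial.coeff_zero_eq_eval_zero, hs_def]
    simp
  have hs : s.coeff 0 ≠ 0 := by
    rw [hs0]
    exact mul_ne_zero (mul_ne_zero (by norm_num) (pow_ne_zero 2 hc))
      (pow_ne_zero 2 (mul_ne_zero (mul_ne_zero (mul_ne_zero ha hb) ha) hb))
  have hN0 : N.coeff 0 = -(2 * (a * b) ^ 2) := by
    rw [Polynomial.coeff_zero_eq_eval_zero, hN]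
    simp
    ring
  -- nonzero denominators in RatFunc
  have hsub : ∀ r : F3, RatFunc.C r - RatFunc.X ≠ 0 := fun r => by
    rw [← RatFunc.algebraMap_C, ← RatFunc.algebraMap_X, ← map_sub]
    refine RatFunc.algebraMap_ne_zero fun h => ?_
    simpa using congrArg (Polynomial.coeff · 1) h
  have hadd : ∀ r : F3, RatFunc.C r + RatFunc.X ≠ 0 := fun r => by
    rw [← RatFunc.algebraMap_C, ← RatFunc.algebraMap_X, ← map_add]
    refine RatFunc.algebraMap_ne_zero fun h => ?_
    simpa using congrArg (Polynomial.coeff · 1) h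
  have hc2 : RatFunc.C c ^ 2 - RatFunc.X ^ 2 ≠ 0 := by
    have e : RatFunc.C c ^ 2 - RatFunc.X ^ 2
        = algebraMap (Polynomial F3) (RatFunc F3) (Polynomial.C c ^ 2 - Polynomial.X ^ 2) := by
      simp [map_sub, map_pow, RatFunc.algebraMap_C, RatFunc.algebraMap_X]
    rw [e]
    refine RatFunc.algebraMap_ne_zero fun h => ?_
    have h' : Polynomial.C (c ^ 2) - Polynomial.X ^ 2 = (0 : Polynomial F3) := by
      rw [Polynomial.C_pow]; exact h
    have h2 := congrArg (Polynomial.coeff · 2) h'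
    simp only [Polynomial.coeff_sub, Polynomial.coeff_C, Polynomial.coeff_X_pow,
      Polynomial.coeff_zero] at h2
    norm_num at h2
  have hX : (RatFunc.X : RatFunc F3) ≠ 0 := RatFunc.X_ne_zero
  have h4 : (4 : RatFunc F3) ≠ 0 := by
    rw [← map_ofNat (algebraMap (Polynomial F3) (RatFunc F3)) 4]
    refine RatFunc.algebraMap_ne_zero fun h => ?_
    have := congrArg (Polynomial.coeff · 0) h
    simp at this
  have hE1 : ((RatFunc.C a - RatFunc.X) ^ 2 * (RatFunc.C b + RatFunc.X) ^ 2) ≠ 0 :=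
    mul_ne_zero (pow_ne_zero _ (hsub a)) (pow_ne_zero _ (hadd b))
  have hE2 : ((RatFunc.C a + RatFunc.X) ^ 2 * (RatFunc.C b - RatFunc.X) ^ 2) ≠ 0 :=
    mul_ne_zero (pow_ne_zero _ (hadd a)) (pow_ne_zero _ (hsub b))
  have hD : (4 * RatFunc.X * (RatFunc.C c ^ 2 - RatFunc.X ^ 2)) ≠ 0 :=
    mul_ne_zero (mul_ne_zero h4 hX) hc2
  have hsne : s ≠ 0 := fun h => hs (by simp [h])
  have hXs : RatFunc.X * algebraMap (Polynomial F3) (RatFunc F3) s ≠ 0 :=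
    mul_ne_zero hX (RatFunc.algebraMap_ne_zero hsne)
  have key : (-(1 / (4 * RatFunc.X * ((Z3 2) ^ 2 - RatFunc.X ^ 2))) *
        (1 / (((Z3 0) - RatFunc.X) ^ 2 * ((Z3 1) + RatFunc.X) ^ 2) +
         1 / (((Z3 0) + RatFunc.X) ^ 2 * ((Z3 1) - RatFunc.X) ^ 2)))
      = (N : RatFunc F3) / (RatFunc.X * (s : RatFunc F3)) := by
    have hN' : ((N : RatFunc F3)) = algebraMap (Polynomial F3) (RatFunc F3) N := rfl
    have hs' : ((s : RatFunc F3)) = algebraMap (Polynomial F3) (RatFunc F3) s := rfl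
    rw [hN', hs']
    simp only [Z3, ← ha_def, ← hb_def, ← hc_def]
    rw [div_add_div _ _ hE1 hE2, neg_mul, div_mul_div_comm, ← neg_div,
      div_eq_div_iff (mul_ne_zero hD (mul_ne_zero hE1 hE2)) hXs, hN, hs_def]
    simp only [map_neg, map_add, map_mul, map_sub, map_pow, map_ofNat,
      RatFunc.algebraMap_C, RatFunc.algebraMap_X]
    ring
  rw [key]
  have hs'' : ((s : RatFunc F3)) = algebraMap (Polynomial F3) (RatFunc F3) s := rfl
  rw [residue_lemma N s hs, hN0, hs0]
  rw [div_eq_div_iff (by rw [← hs0]; exact hs)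
    (mul_ne_zero (mul_ne_zero (mul_ne_zero two_ne_zero (pow_ne_zero _ ha)) (pow_ne_zero _ hb))
      (pow_ne_zero _ hc))]
  ring
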